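/- Fix δ ∈ (0,1) and a nonnegative integer k. Then, as the integer N → ∞, the equilibrium weight p_k^{(N,δ)} satisfies p_k^{(N,δ)} · N^{δ/2^k} → 1; moreover, if k ≥ 1, the cumulative weight satisfies ( Σ_{ℓ=0}^{k−1} p_ℓ^{(N,δ)} ) · N^{δ/2^{k−1}} → 1. -/

import Mathlib

open Filter Finset Topology

namespace MullerRatchet11

/-- Auxiliary recursion computing the pair `(p_k, Σ_{ℓ≤k} p_ℓ)` of the equilibrium
type-frequency weights of the tournament ratchet:
`p_0 = 1 − ρ` and for `k ≥ 1`
`p_k = −½(ρ−1+2Σ_{ℓ<k}p_ℓ) + √(¼(ρ−1+2Σ_{ℓ<k}p_ℓ)² + ρ p_{k−1})`. -/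
noncomputable def pAux (ρ : ℝ) : ℕ → ℝ × ℝ
  | 0 => (1 - ρ, 1 - ρ)
  | k+1 =>
    let a := ρ - 1 + 2 * (pAux ρ k).2
    let p := -(1/2) * a + Real.sqrt ((1/4) * a^2 + ρ * (pAux ρ k).1)
    (p, (pAux ρ k).2 + p)

/-- The equilibrium weight `p_k^{(ρ)}`. -/
noncomputable def pseq (ρ : ℝ) (k : ℕ) : ℝ := (pAux ρ k).1

lemma rpow_tendsto_zero {a : ℝ} (ha : 0 < a) :
    Tendsto (fun ε : ℝ => ε ^ a) (𝓝[>] (0:ℝ)) (𝓝 0) := by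
  have h : ContinuousAt (fun x : ℝ => x ^ a) 0 :=
    Real.continuousAt_rpow_const 0 a (Or.inr ha.le)
  have h2 := h.tendsto
  rw [Real.zero_rpow ha.ne'] at h2
  exact h2.mono_left nhdsWithin_le_nhds

lemma sum_eq (ρ : ℝ) (m : ℕ) :
    ∑ l ∈ Finset.range (m+1), pseq ρ l = (pAux ρ m).2 := by
  induction m with
  | zero => simp [pseq, pAux]
  | succ n ih =>
    rw [Finset.sum_range_succ, ih]
    simp only [pseq, pAux]

lemma key (k : ℕ) :
    Tendsto (fun ε : ℝ => (pAux (1-ε) k).1 / ε ^ ((1/2:ℝ)^k)) (𝓝[>] (0:ℝ)) (𝓝 1) ∧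
    Tendsto (fun ε : ℝ => (pAux (1-ε) k).2 / ε ^ ((1/2:ℝ)^k)) (𝓝[>] (0:ℝ)) (𝓝 1) := by
  induction k with
  | zero =>
    have h : ∀ᶠ ε in 𝓝[>] (0:ℝ), (1:ℝ) = (pAux (1-ε) 0).1 / ε ^ ((1/2:ℝ)^0) := by
      filter_upwards [self_mem_nhdsWithin] with ε (hε : ε ∈ Set.Ioi (0:ℝ))
      simp only [pAux, pow_zero, Real.rpow_one]
      rw [show (1:ℝ) - (1-ε) = ε by ring, div_self (ne_of_gt hε)]
    have h1 : Tendsto (fun ε : ℝ => (pAux (1-ε) 0).1 / ε ^ ((1/2:ℝ)^0)) (𝓝[>] (0:ℝ)) (𝓝 1) :=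
      tendsto_const_nhds.congr' h
    exact ⟨h1, by simpa only [pAux] using h1⟩
  | succ k ih =>
    obtain ⟨hp, hs⟩ := ih
    set l := 𝓝[>] (0:ℝ)
    set ck : ℝ := (1/2:ℝ)^k with hckdef
    set c' : ℝ := (1/2:ℝ)^(k+1) with hc'def
    have hcc : ck = c' + c' := by rw [hckdef, hc'def]; ring
    have hc'pos : 0 < c' := by positivity
    have h1c' : 0 < 1 - c' := by
      have : c' ≤ (1/2:ℝ) := by
        rw [hc'def]
        calc ((1/2:ℝ))^(k+1) ≤ (1/2:ℝ)^1 :=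
          pow_le_pow_of_le_one (by norm_num) (by norm_num) (Nat.le_add_left 1 k)
        _ = 1/2 := pow_one _
      linarith
    have hεpos : ∀ᶠ ε in l, (0:ℝ) < ε := by
      filter_upwards [self_mem_nhdsWithin] with ε hε; exact hε
    -- convergence of a / ε^c'
    have hA : Tendsto
        (fun ε : ℝ => (1 - ε - 1 + 2 * (pAux (1-ε) k).2) / ε ^ c') l (𝓝 0) := by
      have haux : Tendsto
          (fun ε : ℝ => -(ε ^ (1 - c')) + 2 * ((pAux (1-ε) k).2 / ε ^ ck) * ε ^ c')
          l (𝓝 (-(0:ℝ) + 2 * 1 * 0)) :=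
        ((rpow_tendsto_zero h1c').neg).add ((hs.const_mul 2).mul (rpow_tendsto_zero hc'pos))
      rw [show (-(0:ℝ) + 2 * 1 * 0) = 0 by norm_num] at haux
      apply haux.congr'
      filter_upwards [hεpos] with ε h0
      have hE : (0:ℝ) < ε ^ c' := Real.rpow_pos_of_pos h0 _
      have hEck : ε ^ ck = ε ^ c' * ε ^ c' := by rw [hcc, Real.rpow_add h0]
      rw [Real.rpow_sub h0, Real.rpow_one, hEck]
      field_simp
      ring
    -- convergence of p_{k+1}/ε^{c'}
    have hp' : Tendsto (fun ε : ℝ => (pAux (1-ε) (k+1)).1 / ε ^ c') l (𝓝 1) := by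
      have h1mε : Tendsto (fun ε : ℝ => 1 - ε) l (𝓝 1) := by
        have : Tendsto (fun ε : ℝ => 1 - ε) (𝓝 (0:ℝ)) (𝓝 (1 - 0)) :=
          (continuous_const.sub continuous_id).tendsto 0
        rw [sub_zero] at this
        exact this.mono_left nhdsWithin_le_nhds
      have hinner : Tendsto
          (fun ε : ℝ => (1/4) * ((1 - ε - 1 + 2 * (pAux (1-ε) k).2) / ε ^ c')^2
            + (1 - ε) * ((pAux (1-ε) k).1 / ε ^ ck)) l (𝓝 ((1/4) * 0^2 + 1 * 1)) :=
        ((hA.pow 2).const_mul (1/4)).add (h1mε.mul hp)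
      rw [show ((1/4:ℝ) * 0^2 + 1 * 1) = 1 by norm_num] at hinner
      have hg : Tendsto
          (fun ε : ℝ => -(1/2) * ((1 - ε - 1 + 2 * (pAux (1-ε) k).2) / ε ^ c')
            + Real.sqrt ((1/4) * ((1 - ε - 1 + 2 * (pAux (1-ε) k).2) / ε ^ c')^2
              + (1 - ε) * ((pAux (1-ε) k).1 / ε ^ ck))) l (𝓝 (-(1/2) * 0 + Real.sqrt 1)) :=
        (hA.const_mul (-(1/2))).add hinner.sqrt
      rw [show (-(1/2:ℝ) * 0 + Real.sqrt 1) = 1 by simp] at hg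
      apply hg.congr'
      have hpev : ∀ᶠ ε in l, (0:ℝ) < (pAux (1-ε) k).1 / ε ^ ck :=
        hp.eventually (eventually_gt_nhds one_pos)
      have h01 : ∀ᶠ ε in l, ε ∈ Set.Ioo (0:ℝ) 1 :=
        Ioo_mem_nhdsGT_of_mem ⟨le_refl 0, one_pos⟩
      filter_upwards [hpev, h01] with ε hpε hεmem
      obtain ⟨h0, h1⟩ := hεmem
      have hE : (0:ℝ) < ε ^ c' := Real.rpow_pos_of_pos h0 _
      have hEckpos : (0:ℝ) < ε ^ ck := Real.rpow_pos_of_pos h0 _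
      have hEck : ε ^ ck = (ε ^ c') ^ 2 := by rw [hcc, Real.rpow_add h0, sq]
      have hppos : 0 < (pAux (1-ε) k).1 := by
        have := mul_pos hpε hEckpos
        rwa [div_mul_cancel₀ _ (ne_of_gt hEckpos)] at this
      set a : ℝ := 1 - ε - 1 + 2 * (pAux (1-ε) k).2 with hadef
      set p : ℝ := (pAux (1-ε) k).1 with hpdef
      have hX : (0:ℝ) ≤ (1/4) * a^2 + (1-ε) * p :=
        add_nonneg (by positivity) (mul_nonneg (by linarith) hppos.le)
      have hgoal : (pAux (1-ε) (k+1)).1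
          = -(1/2) * a + Real.sqrt ((1/4) * a^2 + (1-ε) * p) := by
        simp only [pAux, hadef, hpdef]
      rw [hgoal]
      rw [show (1/4:ℝ) * (a / ε ^ c')^2 + (1-ε) * (p / ε ^ ck)
          = ((1/4) * a^2 + (1-ε) * p) / (ε ^ c')^2 by
        rw [hEck] at *
        field_simp]
      rw [Real.sqrt_div hX, Real.sqrt_sq hE.le]
      field_simp
    -- convergence of S_{k+1}/ε^{c'}
    have hs' : Tendsto (fun ε : ℝ => (pAux (1-ε) (k+1)).2 / ε ^ c') l (𝓝 1) := by
      have haux : Tendsto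
          (fun ε : ℝ => ((pAux (1-ε) k).2 / ε ^ ck) * ε ^ c'
            + (pAux (1-ε) (k+1)).1 / ε ^ c') l (𝓝 (1 * 0 + 1)) :=
        (hs.mul (rpow_tendsto_zero hc'pos)).add hp'
      rw [show ((1:ℝ) * 0 + 1) = 1 by norm_num] at haux
      apply haux.congr'
      filter_upwards [hεpos] with ε h0
      have hE : (0:ℝ) < ε ^ c' := Real.rpow_pos_of_pos h0 _
      have hEck : ε ^ ck = ε ^ c' * ε ^ c' := by rw [hcc, Real.rpow_add h0]
      have h2 : (pAux (1-ε) (k+1)).2 = (pAux (1-ε) k).2 + (pAux (1-ε) (k+1)).1 := by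
        simp only [pAux]
      rw [h2, add_div, hEck]
      field_simp
    exact ⟨hp', hs'⟩

theorem statement11 (δ : ℝ) (hδ0 : 0 < δ) (hδ1 : δ < 1) (k : ℕ) :
    Tendsto (fun N : ℕ =>
        pseq (1 - (N:ℝ)^(-δ)) k * (N:ℝ)^(δ / (2:ℝ)^k)) atTop (nhds 1) ∧
    (1 ≤ k → Tendsto (fun N : ℕ =>
        (∑ l ∈ Finset.range k, pseq (1 - (N:ℝ)^(-δ)) l) * (N:ℝ)^(δ / (2:ℝ)^(k-1)))
      atTop (nhds 1)) := by
  have hN0 : Tendsto (fun N : ℕ => ((N:ℝ))^(-δ)) atTop (𝓝[>] (0:ℝ)) := by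
    rw [tendsto_nhdsWithin_iff]
    constructor
    · exact (tendsto_rpow_neg_atTop hδ0).comp tendsto_natCast_atTop_atTop
    · filter_upwards [eventually_ge_atTop 1] with N hN
      have : (0:ℝ) < (N:ℝ) := by exact_mod_cast Nat.lt_of_lt_of_le Nat.zero_lt_one hN
      exact Real.rpow_pos_of_pos this _
  have hmain : ∀ m : ℕ, ∀ N : ℕ, 1 ≤ N →
      ((N:ℝ)^(-δ))^((1/2:ℝ)^m) = ((N:ℝ)^(δ / (2:ℝ)^m))⁻¹ := by
    intro m N hN
    have hx : (0:ℝ) ≤ (N:ℝ) := Nat.cast_nonneg N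
    have hexp : -δ * (1/2:ℝ)^m = -(δ / (2:ℝ)^m) := by
      field_simp
      rw [← mul_pow]; norm_num
    rw [← Real.rpow_mul hx, hexp, Real.rpow_neg hx]
  constructor
  · have h := (key k).1.comp hN0
    apply h.congr'
    filter_upwards [eventually_ge_atTop 1] with N hN
    have hx : (0:ℝ) < (N:ℝ) := by exact_mod_cast Nat.lt_of_lt_of_le Nat.zero_lt_one hN
    have hpos : (0:ℝ) < (N:ℝ)^(δ / (2:ℝ)^k) := Real.rpow_pos_of_pos hx _
    show (pAux (1 - (N:ℝ)^(-δ)) k).1 / ((N:ℝ)^(-δ))^((1/2:ℝ)^k) = _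
    rw [hmain k N hN, div_eq_mul_inv, inv_inv]
    rfl
  · intro hk
    obtain ⟨m, rfl⟩ : ∃ m, k = m + 1 := ⟨k-1, (Nat.succ_pred_eq_of_pos hk).symm⟩
    have h := (key m).2.comp hN0
    apply h.congr'
    filter_upwards [eventually_ge_atTop 1] with N hN
    have hx : (0:ℝ) < (N:ℝ) := by exact_mod_cast Nat.lt_of_lt_of_le Nat.zero_lt_one hN
    show (pAux (1 - (N:ℝ)^(-δ)) m).2 / ((N:ℝ)^(-δ))^((1/2:ℝ)^m) = _
    rw [hmain m N hN, div_eq_mul_inv, inv_inv, ← sum_eq]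
    simp

end MullerRatchet11
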